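/- Let A be a complex Banach *-algebra with identity and let a ∈ A be generalized Drazin invertible. Suppose x ∈ A satisfies x a x = x and the left annihilators satisfy ℓ(x) = ℓ(x*) = ℓ(a^d), where ℓ(z) = { y ∈ A : yz = 0 }. Then x is the (unique) generalized core-EP inverse of a, i.e., x = a x², (ax)* = ax, and lim_{n→∞} ‖aⁿ - x a^{n+1}‖^{1/n} = 0. -/
import Mathlib


open Filter Topology

variable {A : Type*} [NormedRing A] [StarRing A] [NormedAlgebra ℂ A] [StarModule ℂ A]
  [CompleteSpace A]

/-- quasinilpotent: `lim ‖z^n‖^(1/n) = 0` -/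
def IsQNil (z : A) : Prop :=
  Tendsto (fun n : ℕ => ‖z ^ n‖ ^ ((1 : ℝ) / n)) atTop (𝓝 0)

/-- generalized Drazin inverse -/
def IsGD (a x : A) : Prop :=
  a * x ^ 2 = x ∧ a * x = x * a ∧ IsQNil (a - a ^ 2 * x)

/-- generalized core-EP inverse -/
def IsGCEP (a x : A) : Prop :=
  x = a * x ^ 2 ∧ star (a * x) = a * x ∧
    Tendsto (fun n : ℕ => ‖a ^ n - x * a ^ (n + 1)‖ ^ ((1 : ℝ) / n)) atTop (𝓝 0)

theorem stmt1 (a ad x : A) (had : IsGD a ad) (h1 : x * a * x = x)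
    (h2 : ∀ y : A, y * x = 0 ↔ y * ad = 0)
    (h3 : ∀ y : A, y * star x = 0 ↔ y * ad = 0) :
    IsGCEP a x := by
  obtain ⟨had1, hcomm, hq⟩ := had
  -- ad * a * ad = ad
  have hada : ad * a * ad = ad := by rw [← hcomm, mul_assoc, ← sq, had1]
  -- x * a * ad = ad
  have hxaad : x * a * ad = ad := by
    have h0 : (x * a - 1) * x = 0 := by rw [sub_mul, one_mul, h1, sub_self]
    have h0' := (h2 _).mp h0
    rw [sub_mul, one_mul, sub_eq_zero] at h0'
    exact h0'
  -- ad * a * x = x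
  have hadax : ad * a * x = x := by
    have h0 : (ad * a - 1) * ad = 0 := by rw [sub_mul, one_mul, hada, sub_self]
    have h0' := (h2 _).mpr h0
    rw [sub_mul, one_mul, sub_eq_zero] at h0'
    exact h0'
  -- a * ad * ad = ad
  have had' : a * ad * ad = ad := by rw [mul_assoc, ← sq, had1]
  -- x * ad = ad * ad
  have hxad : x * ad = ad * ad := by
    calc x * ad = x * (a * ad * ad) := by rw [had']
    _ = x * a * ad * ad := by noncomm_ring
    _ = ad * ad := by rw [hxaad]
  -- a * x * ad = ad
  have haxad : a * x * ad = ad := by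
    calc a * x * ad = a * (x * ad) := by rw [mul_assoc]
    _ = a * (ad * ad) := by rw [hxad]
    _ = ad := by rw [← sq, had1]
  have h0ax : (1 - a * x) * ad = 0 := by rw [sub_mul, one_mul, haxad, sub_self]
  -- condition 1 : x = a * x^2
  have hc1 : x = a * x ^ 2 := by
    have h0' := (h2 _).mpr h0ax
    rw [sub_mul, one_mul, sub_eq_zero] at h0'
    rw [sq, ← mul_assoc]
    exact h0'
  -- condition 2 : star (a * x) = a * x
  have hc2 : star (a * x) = a * x := by
    have h0' := (h3 _).mpr h0ax
    rw [sub_mul, one_mul, sub_eq_zero] at h0'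
    -- h0' : star x = a * x * star x
    have hx' : x = x * star x * star a := by
      conv_lhs => rw [← star_star x, h0']
      simp [star_mul, mul_assoc]
    have hkey : a * x = (a * x) * star (a * x) := by
      conv_lhs => rw [hx']
      simp [star_mul, mul_assoc]
    conv_lhs => rw [hkey]
    rw [star_mul, star_star]
    exact hkey.symm
  refine ⟨hc1, hc2, ?_⟩
  -- powers of a commute with ad
  have hcp : ∀ n : ℕ, a ^ n * ad = ad * a ^ n := fun n => (Commute.pow_left hcomm n)
  have hcad : (1 - x * a) * ad = 0 := by rw [sub_mul, one_mul, hxaad, sub_self]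
  have hz : ∀ m : ℕ, (1 - x * a) * (a ^ m * ad) = 0 := by
    intro m
    rw [hcp m, ← mul_assoc, hcad, zero_mul]
  have hkey : ∀ n : ℕ, (1 - x * a) * (a - a ^ 2 * ad) ^ (n + 1)
      = (1 - x * a) * a ^ (n + 1) := by
    intro n
    induction n with
    | zero =>
      rw [pow_one, pow_one, mul_sub, hz 2, sub_zero]
    | succ n ih =>
      calc (1 - x * a) * (a - a ^ 2 * ad) ^ (n + 1 + 1)
          = ((1 - x * a) * (a - a ^ 2 * ad) ^ (n + 1)) * (a - a ^ 2 * ad) := by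
            rw [pow_succ, mul_assoc]
        _ = ((1 - x * a) * a ^ (n + 1)) * (a - a ^ 2 * ad) := by rw [ih]
        _ = (1 - x * a) * (a ^ (n + 1) * a) - (1 - x * a) * (a ^ (n + 1) * a ^ 2 * ad) := by
            noncomm_ring
        _ = (1 - x * a) * a ^ (n + 1 + 1) := by
            rw [← pow_succ, ← pow_add, hz, sub_zero]
  have hform : ∀ n : ℕ, a ^ (n + 1) - x * a ^ (n + 1 + 1)
      = (1 - x * a) * (a - a ^ 2 * ad) ^ (n + 1) := by
    intro n
    rw [hkey n, sub_mul, one_mul, mul_assoc, ← pow_succ']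
  set C : ℝ := max 1 ‖(1 : A) - x * a‖ with hCdef
  have hC1 : (1 : ℝ) ≤ C := le_max_left _ _
  have hbound : ∀ᶠ n : ℕ in atTop, ‖a ^ n - x * a ^ (n + 1)‖ ^ ((1 : ℝ) / n)
      ≤ C * ‖(a - a ^ 2 * ad) ^ n‖ ^ ((1 : ℝ) / n) := by
    filter_upwards [eventually_ge_atTop 1] with n hn
    obtain ⟨m, rfl⟩ : ∃ m, n = m + 1 := ⟨n - 1, by omega⟩
    have h1n : ‖a ^ (m + 1) - x * a ^ (m + 1 + 1)‖
        ≤ ‖(1 : A) - x * a‖ * ‖(a - a ^ 2 * ad) ^ (m + 1)‖ := by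
      rw [hform m]; exact norm_mul_le _ _
    have hnn : (0 : ℝ) ≤ (1 : ℝ) / ((m : ℝ) + 1) := by positivity
    have hle1 : (1 : ℝ) / ((m : ℝ) + 1) ≤ 1 := by
      rw [div_le_one (by positivity)]
      have : (1 : ℝ) ≤ (m : ℝ) + 1 := by
        have := Nat.cast_nonneg (α := ℝ) m
        linarith
      linarith
    have hCb : ‖(1 : A) - x * a‖ ^ ((1 : ℝ) / ((m : ℝ) + 1)) ≤ C := by
      calc ‖(1 : A) - x * a‖ ^ ((1 : ℝ) / ((m : ℝ) + 1))
          ≤ C ^ ((1 : ℝ) / ((m : ℝ) + 1)) :=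
            Real.rpow_le_rpow (norm_nonneg _) (le_max_right _ _) hnn
        _ ≤ C ^ (1 : ℝ) := Real.rpow_le_rpow_of_exponent_le hC1 hle1
        _ = C := Real.rpow_one C
    have hcast : ((m + 1 : ℕ) : ℝ) = (m : ℝ) + 1 := by push_cast; ring
    calc ‖a ^ (m + 1) - x * a ^ (m + 1 + 1)‖ ^ ((1 : ℝ) / ((m + 1 : ℕ) : ℝ))
        ≤ (‖(1 : A) - x * a‖ * ‖(a - a ^ 2 * ad) ^ (m + 1)‖) ^ ((1 : ℝ) / ((m + 1 : ℕ) : ℝ)) := by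
          rw [hcast]
          exact Real.rpow_le_rpow (norm_nonneg _) h1n hnn
      _ = ‖(1 : A) - x * a‖ ^ ((1 : ℝ) / ((m + 1 : ℕ) : ℝ))
            * ‖(a - a ^ 2 * ad) ^ (m + 1)‖ ^ ((1 : ℝ) / ((m + 1 : ℕ) : ℝ)) :=
          Real.mul_rpow (norm_nonneg _) (norm_nonneg _)
      _ ≤ C * ‖(a - a ^ 2 * ad) ^ (m + 1)‖ ^ ((1 : ℝ) / ((m + 1 : ℕ) : ℝ)) := by
          rw [hcast] at *
          exact mul_le_mul_of_nonneg_right hCb (Real.rpow_nonneg (norm_nonneg _) _)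
  have hq' : Tendsto (fun n : ℕ => ‖(a - a ^ 2 * ad) ^ n‖ ^ ((1 : ℝ) / n)) atTop (𝓝 0) := hq
  have hg : Tendsto (fun n : ℕ => C * ‖(a - a ^ 2 * ad) ^ n‖ ^ ((1 : ℝ) / n)) atTop (𝓝 0) := by
    simpa using hq'.const_mul C
  exact squeeze_zero' (Eventually.of_forall fun n => Real.rpow_nonneg (norm_nonneg _) _)
    hbound hg
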